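/- Let T be a totally unimodular matrix with a 2x2 block structure ((A, a_1), (a_2^T, α)) where α ≠ 0 (so α ∈ {-1,1}). Then the matrix A - α a_1 a_2^T is totally unimodular. -/

import Mathlib

/-- If the block matrix `((A, a₁), (a₂ᵀ, α))` is totally unimodular and
`α ≠ 0`, then the pivoted matrix `A - α a₁ a₂ᵀ` is totally unimodular. -/
theorem stmt5 (k n : ℕ) (A : Matrix (Fin k) (Fin n) ℤ)
    (a₁ : Fin k → ℤ) (a₂ : Fin n → ℤ) (α : ℤ) (hα : α ≠ 0)
    (hT : (Matrix.fromBlocks A (Matrix.of fun i (_ : Unit) => a₁ i)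
        (Matrix.of fun (_ : Unit) j => a₂ j)
        (Matrix.of fun (_ : Unit) (_ : Unit) => α)).IsTotallyUnimodular) :
    (Matrix.of fun i j => A i j - α * a₁ i * a₂ j).IsTotallyUnimodular := by
  -- α = ±1
  have hα1 : α * α = 1 := by
    obtain ⟨s, hs⟩ := hT.apply (Sum.inr ()) (Sum.inr ())
    simp only [Matrix.fromBlocks_apply₂₂, Matrix.of_apply] at hs
    cases s with
    | zero => exact absurd hs.symm (by simpa using hα)
    | pos => rw [← hs]; norm_num
    | neg => rw [← hs]; norm_num
  rw [Matrix.isTotallyUnimodular_iff]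
  intro k' f g
  -- the (k'+1)×(k'+1) submatrix of T
  have hTsub := (Matrix.isTotallyUnimodular_iff_fintype.{0} _).mp hT
    (Fin k' ⊕ Unit) (Sum.map f id) (Sum.map g id)
  set T := Matrix.fromBlocks A (Matrix.of fun i (_ : Unit) => a₁ i)
    (Matrix.of fun (_ : Unit) j => a₂ j) (Matrix.of fun (_ : Unit) (_ : Unit) => α)
  have hblk : T.submatrix (Sum.map f id) (Sum.map g id) =
      Matrix.fromBlocks (A.submatrix f g) (Matrix.of fun i (_ : Unit) => a₁ (f i))
        (Matrix.of fun (_ : Unit) j => a₂ (g j)) (Matrix.of fun (_ : Unit) (_ : Unit) => α) := by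
    ext i j
    cases i <;> cases j <;> rfl
  haveI : Invertible (Matrix.of fun (_ : Unit) (_ : Unit) => α) := by
    refine ⟨Matrix.of fun _ _ => α, ?_, ?_⟩ <;>
      · ext i j
        simp [Matrix.mul_apply, hα1, Matrix.one_apply]
  rw [hblk, Matrix.det_fromBlocks₂₂] at hTsub
  have hD : (Matrix.of fun (_ : Unit) (_ : Unit) => α).det = α := by
    simp [Matrix.det_unique]
  have hinv : (⅟ (Matrix.of fun (_ : Unit) (_ : Unit) => α) : Matrix Unit Unit ℤ) =
      Matrix.of fun _ _ => α := by
    apply invOf_eq_right_inv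
    ext i j
    simp [Matrix.mul_apply, hα1, Matrix.one_apply]
  have hS : A.submatrix f g - (Matrix.of fun i (_ : Unit) => a₁ (f i)) *
        (⅟ (Matrix.of fun (_ : Unit) (_ : Unit) => α)) *
        (Matrix.of fun (_ : Unit) j => a₂ (g j)) =
      (Matrix.of fun i j => A i j - α * a₁ i * a₂ j).submatrix f g := by
    rw [hinv]
    ext i j
    simp only [Matrix.mul_apply, Matrix.sub_apply, Matrix.submatrix_apply, Matrix.of_apply,
      Finset.univ_unique, Finset.sum_singleton]
    ring
  rw [hD, hS] at hTsub
  obtain ⟨s, hs⟩ := hTsub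
  refine ⟨s * SignType.sign α, ?_⟩
  have := congrArg (α * ·) hs
  rw [← mul_assoc, hα1, one_mul] at this
  rw [← this]
  push_cast
  rcases Int.isUnit_iff.mp (IsUnit.of_mul_eq_one α hα1) with h | h <;>
    subst h <;> simp [mul_comm]
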